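/- arXiv:2502.07187 — 2 statements merged into one kernel-verified Lean document; each statement's English description precedes it below -/
import Mathlib

section
/- Fix d ≥ 1, a balanced C ∈ {0,1}^{2d}, A ∈ {0,1}^{2d}, x_test ∈ σ0(C) and x_fool ∈ σ1(C), and define C̄, Ā, h1, h2, h3, h4, S1, S2, S3, S4 as in the context. Then for every locally injective local regularizer ψ for H_OTP and every learner A induced by ψ, there exists i ∈ {1,2,3,4} such that A(T_i)(x_test) ≠ h_i(x_test), where T_i is the training sequence consisting of the examples (s, h_i(s)) for s ∈ S_i \ {x_test}. -/
open scoped Classical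

noncomputable section

/-- Binary strings of length `d`, i.e. elements of `{0,1}^d`. -/
abbrev BStr (d : ℕ) := Fin d → Bool

/-- Entrywise XOR of two binary strings. -/
def bxor {d : ℕ} (A B : BStr d) : BStr d := fun i => xor (A i) (B i)

/-- `σ₀(C)`: the positions at which `C` takes the value `0`. -/
def sigma0 {d : ℕ} (C : BStr d) : Finset (Fin d) := Finset.univ.filter fun i => C i = false

/-- `σ₁(C)`: the positions at which `C` takes the value `1`. -/
def sigma1 {d : ℕ} (C : BStr d) : Finset (Fin d) := Finset.univ.filter fun i => C i = true

/-- A binary string is balanced if it has as many `0`-entries as `1`-entries. -/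
def BalancedStr {d : ℕ} (C : BStr d) : Prop := (sigma0 C).card = (sigma1 C).card

/-- The label space `Y = {0,1} × {0,1}^*`. -/
abbrev Label : Type := Bool × List Bool

/-- The hypothesis `h_{A,B} : ℕ → Y`, mapping `x` to `(0, A)` if `(A ⊕ B)(x mod d) = 0`
and to `(1, B)` if `(A ⊕ B)(x mod d) = 1`. -/
def hyp {d : ℕ} (A B : BStr d) : ℕ → Label := fun x =>
  if hd : 0 < d then
    if bxor A B ⟨x % d, Nat.mod_lt x hd⟩ = true then (true, List.ofFn B)
    else (false, List.ofFn A)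
  else (false, List.ofFn A)

/-- The secret-sharing hypothesis class `H_OTP`. -/
def HOTP : Set (ℕ → Label) :=
  { h | ∃ (d : ℕ) (A B : BStr d), 1 ≤ d ∧ BalancedStr (bxor A B) ∧ h = hyp A B }

/-- The training sequence obtained by labeling the points of `S` by `h` and removing
the `i`-th (labeled) point. -/
def trainSeq {X Y : Type*} {n : ℕ} (S : Fin n → X) (h : X → Y) (i : Fin n) :
    List (X × Y) :=
  (List.ofFn fun j => (S j, h (S j))).eraseIdx i

/-- The transductive error `L^T_{S,h}(Alg)` of the learner `Alg` on the instance `(S, h)`. -/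
def transErr {X Y : Type*} {n : ℕ} (Alg : List (X × Y) → X → Y) (S : Fin n → X)
    (h : X → Y) : ℝ :=
  (∑ i : Fin n, if Alg (trainSeq S h i) (S i) = h (S i) then (0 : ℝ) else 1) / n

/-- `Alg` is a transductive learner for the class `H`. -/
def TransLearner {X Y : Type*} (H : Set (X → Y)) (Alg : List (X × Y) → X → Y) : Prop :=
  ∃ m : ℝ → ℕ, ∀ ε : ℝ, 0 < ε → ε < 1 → ∀ h ∈ H, ∀ (n : ℕ) (S : Fin n → X),
    m ε ≤ n → transErr Alg S h ≤ ε

/-- The class `H` is transductively learnable. -/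
def TransLearnable {X Y : Type*} (H : Set (X → Y)) : Prop :=
  ∃ Alg : List (X × Y) → X → Y, TransLearner H Alg

/-- The empirical risk `L_S(h)`: the fraction of examples in `S` mislabeled by `h`. -/
def empRisk {X Y : Type*} (S : List (X × Y)) (h : X → Y) : ℝ :=
  ((S.map fun p => if h p.1 = p.2 then (0 : ℝ) else 1).sum) / S.length

/-- The learner `Alg` is induced by the local regularizer `ψ : H × X → ℝ≥0`: whenever
the argmin set `M(S,x)` of `ψ(·, x)` over zero-empirical-risk hypotheses is nonempty,
`Alg S x` agrees with some hypothesis in `M(S,x)` at `x`. -/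
def InducedBy {X Y : Type*} (H : Set (X → Y)) (ψ : H → X → NNReal)
    (Alg : List (X × Y) → X → Y) : Prop :=
  ∀ (S : List (X × Y)) (x : X),
    (∃ h : H, empRisk S h.1 = 0 ∧ ∀ g : H, empRisk S g.1 = 0 → ψ h x ≤ ψ g x) →
    ∃ h : H, empRisk S h.1 = 0 ∧ (∀ g : H, empRisk S g.1 = 0 → ψ h x ≤ ψ g x) ∧
      Alg S x = h.1 x

/-- A local regularizer is locally injective if `ψ(·, x)` is injective for every `x`. -/
def LocallyInjective {X Y : Type*} (H : Set (X → Y)) (ψ : H → X → NNReal) : Prop :=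
  ∀ x : X, Function.Injective fun h : H => ψ h x

/-- A class is generalized binary if each of its hypotheses has image of size at most 2. -/
def GeneralizedBinary {X Y : Type*} (H : Set (X → Y)) : Prop :=
  ∀ h ∈ H, ∃ y₁ y₂ : Y, ∀ x : X, h x = y₁ ∨ h x = y₂

/-- A class has distinct label sets if `im` is injective on it. -/
def DistinctLabelSets {X Y : Type*} (H : Set (X → Y)) : Prop :=
  ∀ h ∈ H, ∀ h' ∈ H, Set.range h = Set.range h' → h = h'

/-- A class is GBDLS if it is generalized binary and has distinct label sets. -/
def GBDLS {X Y : Type*} (H : Set (X → Y)) : Prop :=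
  GeneralizedBinary H ∧ DistinctLabelSets H

/-- `e(i)`: the standard basis string, with a single `1` in position `i`. -/
def evec {d : ℕ} (i : Fin d) : BStr d := fun j => decide (j = i)

/-- `C ⊕ e(x) ⊕ e(x')`: the string `C` with its `x`-th and `x'`-th entries flipped. -/
def flip2 {d : ℕ} (C : BStr d) (x x' : Fin d) : BStr d := bxor (bxor C (evec x)) (evec x')

/-- The training sequence consisting of the examples `(s, h s)` for `s ∈ S`
(listed in increasing order). -/
def trainOn {d : ℕ} (S : Finset (Fin d)) (h : ℕ → Label) : List (ℕ × Label) :=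
  (S.sort (· ≤ ·)).map fun s => ((s : ℕ), h (s : ℕ))


/-! ### Auxiliary lemmas -/

lemma bxor_self_left {d : ℕ} (A C : BStr d) : bxor A (bxor C A) = C := by
  funext i
  simp only [bxor]
  cases A i <;> cases C i <;> rfl

lemma bxor_self_left' {d : ℕ} (C B : BStr d) : bxor C (bxor C B) = B := by
  funext i
  simp only [bxor]
  cases C i <;> cases B i <;> rfl

lemma bxor_flip2_right {d : ℕ} (C A : BStr d) (x x' : Fin d) :
    bxor C (flip2 A x x') = bxor (flip2 C x x') A := by
  funext i
  simp only [bxor, flip2, evec]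
  cases C i <;> cases A i <;> cases (decide (i = x)) <;> cases (decide (i = x')) <;> rfl

lemma bxor_flip2_flip2 {d : ℕ} (C A : BStr d) (x x' : Fin d) :
    bxor (flip2 C x x') (flip2 A x x') = bxor C A := by
  funext i
  simp only [bxor, flip2, evec]
  cases C i <;> cases A i <;> cases (decide (i = x)) <;> cases (decide (i = x')) <;> rfl

lemma flip2_apply {d : ℕ} (C : BStr d) (x x' i : Fin d) :
    flip2 C x x' i = xor (xor (C i) (decide (i = x))) (decide (i = x')) := rfl

lemma flip2_apply_fst {d : ℕ} (C : BStr d) {x x' : Fin d} (hne : x ≠ x') :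
    flip2 C x x' x = !(C x) := by
  simp [flip2_apply, hne]

lemma flip2_apply_snd {d : ℕ} (C : BStr d) {x x' : Fin d} (hne : x ≠ x') :
    flip2 C x x' x' = !(C x') := by
  simp [flip2_apply, hne.symm]

lemma flip2_apply_other {d : ℕ} (C : BStr d) {x x' i : Fin d} (h1 : i ≠ x) (h2 : i ≠ x') :
    flip2 C x x' i = C i := by
  simp [flip2_apply, h1, h2]

lemma hyp_apply {n : ℕ} (hn : 0 < n) (A B : BStr n) (i : Fin n) :
    hyp A B (i : ℕ) =
      if bxor A B i = true then (true, List.ofFn B) else (false, List.ofFn A) := by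
  unfold hyp
  rw [dif_pos hn]
  have h2 : (⟨(i : ℕ) % n, Nat.mod_lt _ hn⟩ : Fin n) = i := by
    ext; simp [Nat.mod_eq_of_lt i.isLt]
  rw [h2]

lemma hyp_apply_false {n : ℕ} (hn : 0 < n) (A B : BStr n) (i : Fin n)
    (h : bxor A B i = false) : hyp A B (i : ℕ) = (false, List.ofFn A) := by
  rw [hyp_apply hn A B i, h]; simp

lemma hyp_apply_true {n : ℕ} (hn : 0 < n) (A B : BStr n) (i : Fin n)
    (h : bxor A B i = true) : hyp A B (i : ℕ) = (true, List.ofFn B) := by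
  rw [hyp_apply hn A B i, h]; simp

lemma mem_sigma0 {d : ℕ} {C : BStr d} {i : Fin d} : i ∈ sigma0 C ↔ C i = false := by
  simp [sigma0]

lemma mem_sigma1 {d : ℕ} {C : BStr d} {i : Fin d} : i ∈ sigma1 C ↔ C i = true := by
  simp [sigma1]

lemma balanced_card {m : ℕ} {C : BStr m} (h : BalancedStr C) :
    2 * (sigma0 C).card = m := by
  have := Finset.card_filter_add_card_filter_not (s := (Finset.univ : Finset (Fin m)))
    (fun i => C i = false)
  have h2 : (Finset.filter (fun i => ¬ C i = false) Finset.univ) = sigma1 C := by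
    ext i; simp [sigma1]
  rw [h2] at this
  have h3 : (sigma0 C).card + (sigma1 C).card = m := by simpa [sigma0] using this
  unfold BalancedStr at h
  omega

lemma eq_of_balanced_sigma0_subset {m : ℕ} {C P : BStr m} (hC : BalancedStr C)
    (hP : BalancedStr P) (hsub : sigma0 C ⊆ sigma0 P) : P = C := by
  have hcard : (sigma0 P).card ≤ (sigma0 C).card := by
    have h1 := balanced_card hC
    have h2 := balanced_card hP
    omega
  have heq : sigma0 C = sigma0 P := Finset.eq_of_subset_of_card_le hsub hcard
  funext i
  by_cases h : C i = false
  · have : i ∈ sigma0 P := by rw [← heq, mem_sigma0]; exact h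
    rw [mem_sigma0] at this
    rw [this, h]
  · simp only [Bool.not_eq_false] at h
    have hni : i ∉ sigma0 P := by
      rw [← heq, mem_sigma0]; simp [h]
    rw [mem_sigma0] at hni
    simp only [Bool.not_eq_false] at hni
    rw [hni, h]

lemma eq_of_balanced_sigma1_subset {m : ℕ} {C P : BStr m} (hC : BalancedStr C)
    (hP : BalancedStr P) (hsub : sigma1 C ⊆ sigma1 P) : P = C := by
  have hcard : (sigma1 P).card ≤ (sigma1 C).card := by
    have h1 := balanced_card hC
    have h2 := balanced_card hP
    unfold BalancedStr at hC hP
    omega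
  have heq : sigma1 C = sigma1 P := Finset.eq_of_subset_of_card_le hsub hcard
  funext i
  by_cases h : C i = true
  · have : i ∈ sigma1 P := by rw [← heq, mem_sigma1]; exact h
    rw [mem_sigma1] at this
    rw [this, h]
  · simp only [Bool.not_eq_true] at h
    have hni : i ∉ sigma1 P := by rw [← heq, mem_sigma1]; simp [h]
    rw [mem_sigma1] at hni
    simp only [Bool.not_eq_true] at hni
    rw [hni, h]
lemma trainOn_eq {d : ℕ} (S : Finset (Fin d)) (h0 : ℕ → Label) :
    trainOn S h0 = (S.sort (· ≤ ·)).map (fun s : Fin d => ((s : ℕ), h0 (s : ℕ))) := by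
  unfold trainOn
  induction (Finset.sort S (fun x1 x2 => x1 ≤ x2)) with
  | nil => rfl
  | cons a l ih => simpa using ih

lemma list_sum_sort {d : ℕ} (S : Finset (Fin d)) (f : Fin d → ℝ) :
    ((S.sort (· ≤ ·)).map f).sum = ∑ s ∈ S, f s := by
  rw [List.Perm.sum_eq ((Finset.sort_perm_toList (s := S) (r := (· ≤ ·))).map f)]
  exact Finset.sum_map_toList S f

lemma empRisk_trainOn {d : ℕ} (S : Finset (Fin d)) (h0 h : ℕ → Label) :
    empRisk (trainOn S h0) h =
      (∑ s ∈ S, if h (s : ℕ) = h0 (s : ℕ) then (0 : ℝ) else 1) / S.card := by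
  rw [trainOn_eq]
  unfold empRisk
  rw [List.map_map, List.length_map, Finset.length_sort, list_sum_sort]
  congr 1
  apply Finset.sum_congr rfl
  intro s _
  simp only [Function.comp_apply]
  congr 1

lemma empRisk_trainOn_self {d : ℕ} (S : Finset (Fin d)) (h0 h : ℕ → Label)
    (hagree : ∀ s ∈ S, h (s : ℕ) = h0 (s : ℕ)) : empRisk (trainOn S h0) h = 0 := by
  rw [empRisk_trainOn]
  have : (∑ s ∈ S, if h (s : ℕ) = h0 (s : ℕ) then (0 : ℝ) else 1) = 0 :=
    Finset.sum_eq_zero fun s hs => by rw [if_pos (hagree s hs)]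
  rw [this, zero_div]

lemma empRisk_trainOn_zero {d : ℕ} {S : Finset (Fin d)} {h0 h : ℕ → Label}
    (hS : S.Nonempty) (hrisk : empRisk (trainOn S h0) h = 0) :
    ∀ s ∈ S, h (s : ℕ) = h0 (s : ℕ) := by
  rw [empRisk_trainOn] at hrisk
  have hcard : (S.card : ℝ) ≠ 0 := by
    simp [Finset.card_ne_zero_of_mem hS.choose_spec]
  rw [div_eq_zero_iff] at hrisk
  have hsum : (∑ s ∈ S, if h (s : ℕ) = h0 (s : ℕ) then (0 : ℝ) else 1) = 0 := by
    rcases hrisk with h1 | h1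
    · exact h1
    · exact absurd h1 hcard
  have := (Finset.sum_eq_zero_iff_of_nonneg
    (f := fun s : Fin d => if h (s : ℕ) = h0 (s : ℕ) then (0 : ℝ) else 1)
    (s := S) (fun i _ => by positivity)).mp hsum
  intro s hs
  have h2 := this s hs
  by_contra hne
  rw [if_neg hne] at h2
  norm_num at h2
lemma ofFn_dim_eq {d' n : ℕ} {A' : BStr d'} {L : BStr n}
    (h : List.ofFn A' = List.ofFn L) : d' = n := by
  have := congrArg List.length h
  simpa using this

lemma uniq0 {n : ℕ} (hn : 0 < n) (C A : BStr n) (hC : BalancedStr C)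
    (hne : (sigma0 C).Nonempty) (g : ℕ → Label) (hg : g ∈ HOTP)
    (hlab : ∀ i ∈ sigma0 C, g (i : ℕ) = (false, List.ofFn A)) :
    g = hyp A (bxor C A) := by
  obtain ⟨d', A', B', hd', hbal, rfl⟩ := hg
  have hd'0 : 0 < d' := hd'
  obtain ⟨s, hs⟩ := hne
  -- pin down the dimension and A'
  have hs' := hlab s hs
  have hsmod : hyp A' B' (s : ℕ) =
      if bxor A' B' ⟨(s : ℕ) % d', Nat.mod_lt _ hd'0⟩ = true
        then (true, List.ofFn B') else (false, List.ofFn A') := by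
    unfold hyp
    rw [dif_pos hd'0]
  rw [hsmod] at hs'
  by_cases hb : bxor A' B' ⟨(s : ℕ) % d', Nat.mod_lt _ hd'0⟩ = true
  · rw [if_pos hb] at hs'
    exact absurd (congrArg Prod.fst hs') (by simp)
  · rw [if_neg hb] at hs'
    have hofn : List.ofFn A' = List.ofFn A := congrArg Prod.snd hs'
    have hdim : d' = n := ofFn_dim_eq hofn
    subst hdim
    have hA : A' = A := List.ofFn_inj.mp hofn
    subst hA
    -- the pattern vanishes on sigma0 C
    have hpat : ∀ i ∈ sigma0 C, bxor A' B' i = false := by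
      intro i hi
      have hi' := hlab i hi
      by_contra hbi
      simp only [Bool.not_eq_false] at hbi
      rw [hyp_apply_true hn A' B' i hbi] at hi'
      exact absurd (congrArg Prod.fst hi') (by simp)
    have hsub : sigma0 C ⊆ sigma0 (bxor A' B') := by
      intro i hi
      rw [mem_sigma0]
      exact hpat i hi
    have hPC : bxor A' B' = C := eq_of_balanced_sigma0_subset hC hbal hsub
    have hB : B' = bxor C A' := by
      funext i
      have := congrFun hPC i
      simp only [bxor] at this ⊢
      revert this
      cases A' i <;> cases B' i <;> cases C i <;> simp
    rw [hB]

lemma uniq1 {n : ℕ} (hn : 0 < n) (C B : BStr n) (hC : BalancedStr C)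
    (hne : (sigma1 C).Nonempty) (g : ℕ → Label) (hg : g ∈ HOTP)
    (hlab : ∀ i ∈ sigma1 C, g (i : ℕ) = (true, List.ofFn B)) :
    g = hyp (bxor C B) B := by
  obtain ⟨d', A', B', hd', hbal, rfl⟩ := hg
  have hd'0 : 0 < d' := hd'
  obtain ⟨s, hs⟩ := hne
  have hs' := hlab s hs
  have hsmod : hyp A' B' (s : ℕ) =
      if bxor A' B' ⟨(s : ℕ) % d', Nat.mod_lt _ hd'0⟩ = true
        then (true, List.ofFn B') else (false, List.ofFn A') := by
    unfold hyp
    rw [dif_pos hd'0]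
  rw [hsmod] at hs'
  by_cases hb : bxor A' B' ⟨(s : ℕ) % d', Nat.mod_lt _ hd'0⟩ = true
  · rw [if_pos hb] at hs'
    have hofn : List.ofFn B' = List.ofFn B := congrArg Prod.snd hs'
    have hdim : d' = n := ofFn_dim_eq hofn
    subst hdim
    have hB : B' = B := List.ofFn_inj.mp hofn
    subst hB
    have hpat : ∀ i ∈ sigma1 C, bxor A' B' i = true := by
      intro i hi
      have hi' := hlab i hi
      by_contra hbi
      simp only [Bool.not_eq_true] at hbi
      rw [hyp_apply_false hn A' B' i hbi] at hi'
      exact absurd (congrArg Prod.fst hi') (by simp)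
    have hsub : sigma1 C ⊆ sigma1 (bxor A' B') := by
      intro i hi
      rw [mem_sigma1]
      exact hpat i hi
    have hPC : bxor A' B' = C := eq_of_balanced_sigma1_subset hC hbal hsub
    have hA : A' = bxor C B' := by
      funext i
      have := congrFun hPC i
      simp only [bxor] at this ⊢
      revert this
      cases A' i <;> cases B' i <;> cases C i <;> simp
    rw [hA]
  · rw [if_neg hb] at hs'
    exact absurd (congrArg Prod.fst hs') (by simp)

lemma consistent_finite {n : ℕ} (hn : 0 < n) (S : Finset (Fin n)) (h0 : ℕ → Label)
    {s0 : Fin n} (hs0 : s0 ∈ S) {b0 : Bool} {L0 : BStr n}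
    (hlab : h0 (s0 : ℕ) = (b0, List.ofFn L0)) :
    {g : HOTP | empRisk (trainOn S h0) g.1 = 0}.Finite := by
  have hT : (Set.range (fun p : BStr n × BStr n => hyp p.1 p.2)).Finite :=
    Set.finite_range _
  apply Set.Finite.subset
    (Set.Finite.preimage (Set.injOn_of_injective Subtype.val_injective)
      hT (f := (Subtype.val : HOTP → (ℕ → Label))))
  intro g hg
  simp only [Set.mem_setOf_eq] at hg
  obtain ⟨d', A', B', hd', hbal, hgeq⟩ := g.2
  have hd'0 : 0 < d' := hd'
  have hgs : g.1 (s0 : ℕ) = h0 (s0 : ℕ) :=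
    empRisk_trainOn_zero ⟨s0, hs0⟩ hg s0 hs0
  rw [hgeq, hlab] at hgs
  have hsmod : hyp A' B' (s0 : ℕ) =
      if bxor A' B' ⟨(s0 : ℕ) % d', Nat.mod_lt _ hd'0⟩ = true
        then (true, List.ofFn B') else (false, List.ofFn A') := by
    unfold hyp
    rw [dif_pos hd'0]
  rw [hsmod] at hgs
  have hdim : d' = n := by
    by_cases hb : bxor A' B' ⟨(s0 : ℕ) % d', Nat.mod_lt _ hd'0⟩ = true
    · rw [if_pos hb] at hgs
      exact ofFn_dim_eq (congrArg Prod.snd hgs)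
    · rw [if_neg hb] at hgs
      exact ofFn_dim_eq (congrArg Prod.snd hgs)
  subst hdim
  exact ⟨(A', B'), hgeq.symm⟩
lemma step0 {n : ℕ} (hn : 0 < n) (C A : BStr n) (hC : BalancedStr C)
    (xt : Fin n) (hxt : C xt = false) (hSne : ((sigma0 C).erase xt).Nonempty)
    (ψ : HOTP → ℕ → NNReal) (hψ : LocallyInjective HOTP ψ)
    (Alg : List (ℕ × Label) → ℕ → Label) (hAlg : InducedBy HOTP ψ Alg)
    (m1 : hyp A (bxor C A) ∈ HOTP)
    (g2 : ℕ → Label) (hg2 : g2 ∈ HOTP)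
    (hg2lab : ∀ s ∈ (sigma0 C).erase xt, g2 (s : ℕ) = (false, List.ofFn A))
    (hg2xt : g2 (xt : ℕ) ≠ (false, List.ofFn A))
    (hOut : Alg (trainOn ((sigma0 C).erase xt) (hyp A (bxor C A))) (xt : ℕ)
        = hyp A (bxor C A) (xt : ℕ)) :
    ψ ⟨hyp A (bxor C A), m1⟩ (xt : ℕ) < ψ ⟨g2, hg2⟩ (xt : ℕ) := by
  set T := trainOn ((sigma0 C).erase xt) (hyp A (bxor C A)) with hT
  have hpat : bxor A (bxor C A) = C := bxor_self_left A C
  have hlab1 : ∀ s ∈ (sigma0 C).erase xt,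
      hyp A (bxor C A) (s : ℕ) = (false, List.ofFn A) := by
    intro s hs
    have hCs : C s = false := mem_sigma0.mp (Finset.mem_of_mem_erase hs)
    exact hyp_apply_false hn _ _ s (by rw [hpat]; exact hCs)
  have h1xt : hyp A (bxor C A) (xt : ℕ) = (false, List.ofFn A) :=
    hyp_apply_false hn _ _ xt (by rw [hpat]; exact hxt)
  have risk1 : empRisk T (hyp A (bxor C A)) = 0 :=
    empRisk_trainOn_self _ _ _ (fun s _ => rfl)
  have risk2 : empRisk T g2 = 0 :=
    empRisk_trainOn_self _ _ _ (fun s hs => by rw [hg2lab s hs, hlab1 s hs])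
  obtain ⟨s0, hs0⟩ := hSne
  have hfin : {g : HOTP | empRisk T g.1 = 0}.Finite :=
    consistent_finite hn _ _ hs0 (hlab1 s0 hs0)
  have hne' : {g : HOTP | empRisk T g.1 = 0}.Nonempty :=
    ⟨⟨hyp A (bxor C A), m1⟩, risk1⟩
  obtain ⟨a, ha, hmin⟩ := Set.exists_min_image _ (fun g : HOTP => ψ g (xt : ℕ)) hfin hne'
  obtain ⟨hstar, hrisk, hminstar, heqOut⟩ :=
    hAlg T (xt : ℕ) ⟨a, ha, fun g hg => hmin g hg⟩
  have hstar_eq : hstar.1 = hyp A (bxor C A) := by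
    apply uniq0 hn C A hC ⟨xt, mem_sigma0.mpr hxt⟩ hstar.1 hstar.2
    intro i hi
    by_cases hixt : i = xt
    · subst hixt
      rw [← heqOut, hOut, h1xt]
    · have hi' : i ∈ (sigma0 C).erase xt := Finset.mem_erase.mpr ⟨hixt, hi⟩
      rw [empRisk_trainOn_zero ⟨s0, hs0⟩ hrisk i hi']
      exact hlab1 i hi'
  have hstar_eq' : hstar = ⟨hyp A (bxor C A), m1⟩ := Subtype.ext hstar_eq
  have hle : ψ ⟨hyp A (bxor C A), m1⟩ (xt : ℕ) ≤ ψ ⟨g2, hg2⟩ (xt : ℕ) := by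
    rw [← hstar_eq']
    exact hminstar ⟨g2, hg2⟩ risk2
  refine lt_of_le_of_ne hle fun hcontra => ?_
  have : (⟨hyp A (bxor C A), m1⟩ : HOTP) = ⟨g2, hg2⟩ := hψ (xt : ℕ) hcontra
  have hg2e : g2 = hyp A (bxor C A) := (congrArg Subtype.val this).symm
  rw [hg2e] at hg2xt
  exact hg2xt h1xt

lemma step1 {n : ℕ} (hn : 0 < n) (C A : BStr n) (hC : BalancedStr C)
    (xt : Fin n) (hxt : C xt = true) (hSne : ((sigma1 C).erase xt).Nonempty)
    (ψ : HOTP → ℕ → NNReal) (hψ : LocallyInjective HOTP ψ)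
    (Alg : List (ℕ × Label) → ℕ → Label) (hAlg : InducedBy HOTP ψ Alg)
    (m1 : hyp A (bxor C A) ∈ HOTP)
    (g2 : ℕ → Label) (hg2 : g2 ∈ HOTP)
    (hg2lab : ∀ s ∈ (sigma1 C).erase xt, g2 (s : ℕ) = (true, List.ofFn (bxor C A)))
    (hg2xt : g2 (xt : ℕ) ≠ (true, List.ofFn (bxor C A)))
    (hOut : Alg (trainOn ((sigma1 C).erase xt) (hyp A (bxor C A))) (xt : ℕ)
        = hyp A (bxor C A) (xt : ℕ)) :
    ψ ⟨hyp A (bxor C A), m1⟩ (xt : ℕ) < ψ ⟨g2, hg2⟩ (xt : ℕ) := by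
  set T := trainOn ((sigma1 C).erase xt) (hyp A (bxor C A)) with hT
  have hpat : bxor A (bxor C A) = C := bxor_self_left A C
  have hlab1 : ∀ s ∈ (sigma1 C).erase xt,
      hyp A (bxor C A) (s : ℕ) = (true, List.ofFn (bxor C A)) := by
    intro s hs
    have hCs : C s = true := mem_sigma1.mp (Finset.mem_of_mem_erase hs)
    exact hyp_apply_true hn _ _ s (by rw [hpat]; exact hCs)
  have h1xt : hyp A (bxor C A) (xt : ℕ) = (true, List.ofFn (bxor C A)) :=
    hyp_apply_true hn _ _ xt (by rw [hpat]; exact hxt)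
  have risk1 : empRisk T (hyp A (bxor C A)) = 0 :=
    empRisk_trainOn_self _ _ _ (fun s _ => rfl)
  have risk2 : empRisk T g2 = 0 :=
    empRisk_trainOn_self _ _ _ (fun s hs => by rw [hg2lab s hs, hlab1 s hs])
  obtain ⟨s0, hs0⟩ := hSne
  have hfin : {g : HOTP | empRisk T g.1 = 0}.Finite :=
    consistent_finite hn _ _ hs0 (hlab1 s0 hs0)
  have hne' : {g : HOTP | empRisk T g.1 = 0}.Nonempty :=
    ⟨⟨hyp A (bxor C A), m1⟩, risk1⟩
  obtain ⟨a, ha, hmin⟩ := Set.exists_min_image _ (fun g : HOTP => ψ g (xt : ℕ)) hfin hne'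
  obtain ⟨hstar, hrisk, hminstar, heqOut⟩ :=
    hAlg T (xt : ℕ) ⟨a, ha, fun g hg => hmin g hg⟩
  have hstar_eq : hstar.1 = hyp A (bxor C A) := by
    have huniq : hstar.1 = hyp (bxor C (bxor C A)) (bxor C A) := by
      apply uniq1 hn C (bxor C A) hC ⟨xt, mem_sigma1.mpr hxt⟩ hstar.1 hstar.2
      intro i hi
      by_cases hixt : i = xt
      · subst hixt
        rw [← heqOut, hOut, h1xt]
      · have hi' : i ∈ (sigma1 C).erase xt := Finset.mem_erase.mpr ⟨hixt, hi⟩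
        rw [empRisk_trainOn_zero ⟨s0, hs0⟩ hrisk i hi']
        exact hlab1 i hi'
    rw [huniq, bxor_self_left']
  have hstar_eq' : hstar = ⟨hyp A (bxor C A), m1⟩ := Subtype.ext hstar_eq
  have hle : ψ ⟨hyp A (bxor C A), m1⟩ (xt : ℕ) ≤ ψ ⟨g2, hg2⟩ (xt : ℕ) := by
    rw [← hstar_eq']
    exact hminstar ⟨g2, hg2⟩ risk2
  refine lt_of_le_of_ne hle fun hcontra => ?_
  have : (⟨hyp A (bxor C A), m1⟩ : HOTP) = ⟨g2, hg2⟩ := hψ (xt : ℕ) hcontra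
  have hg2e : g2 = hyp A (bxor C A) := (congrArg Subtype.val this).symm
  rw [hg2e] at hg2xt
  exact hg2xt h1xt

/-- in the four coupled transductive instances built from balanced
`C ∈ {0,1}^{2d}`, `A ∈ {0,1}^{2d}`, `x_test ∈ σ₀(C)`, `x_fool ∈ σ₁(C)`, every learner
induced by a locally injective local regularizer errs at `x_test` in at least one
instance. -/
theorem statement8 (d : ℕ) (hd : 1 ≤ d) (C A : BStr (2 * d)) (hC : BalancedStr C)
    (xt xf : Fin (2 * d)) (hxt : xt ∈ sigma0 C) (hxf : xf ∈ sigma1 C)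
    (ψ : HOTP → ℕ → NNReal) (hψ : LocallyInjective HOTP ψ)
    (Alg : List (ℕ × Label) → ℕ → Label) (hAlg : InducedBy HOTP ψ Alg) :
    Alg (trainOn ((sigma0 C).erase xt) (hyp A (bxor C A))) xt
        ≠ hyp A (bxor C A) xt ∨
    Alg (trainOn ((sigma1 (flip2 C xt xf)).erase xt)
          (hyp A (bxor (flip2 C xt xf) A))) xt
        ≠ hyp A (bxor (flip2 C xt xf) A) xt ∨
    Alg (trainOn ((sigma0 C).erase xt)
          (hyp (flip2 A xt xf) (bxor C (flip2 A xt xf)))) xt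
        ≠ hyp (flip2 A xt xf) (bxor C (flip2 A xt xf)) xt ∨
    Alg (trainOn ((sigma1 (flip2 C xt xf)).erase xt)
          (hyp (flip2 A xt xf) (bxor (flip2 C xt xf) (flip2 A xt xf)))) xt
        ≠ hyp (flip2 A xt xf) (bxor (flip2 C xt xf) (flip2 A xt xf)) xt := by
  by_contra hcon
  push_neg at hcon
  obtain ⟨e1, e2, e3, e4⟩ := hcon
  have hn : 0 < 2 * d := by omega
  have hCxt : C xt = false := mem_sigma0.mp hxt
  have hCxf : C xf = true := mem_sigma1.mp hxf
  have hnetf : xt ≠ xf := by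
    intro h
    rw [h, hCxf] at hCxt
    exact absurd hCxt (by simp)
  set Cb := flip2 C xt xf with hCbdef
  set Ab := flip2 A xt xf with hAbdef
  have hCbxt : Cb xt = true := by rw [hCbdef, flip2_apply_fst C hnetf, hCxt]; rfl
  have hCbxf : Cb xf = false := by rw [hCbdef, flip2_apply_snd C hnetf, hCxf]; rfl
  have hCbo : ∀ i, i ≠ xt → i ≠ xf → Cb i = C i :=
    fun i h1 h2 => flip2_apply_other C h1 h2
  have hs0Cb : sigma0 Cb = insert xf ((sigma0 C).erase xt) := by
    ext i
    rw [mem_sigma0, Finset.mem_insert, Finset.mem_erase, mem_sigma0]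
    by_cases h1 : i = xt
    · subst h1; simp [hCbxt, hCxt, hnetf]
    · by_cases h2 : i = xf
      · subst h2; simp [hCbxf]
      · rw [hCbo i h1 h2]; simp [h1, h2]
  have hs1Cb : sigma1 Cb = insert xt ((sigma1 C).erase xf) := by
    ext i
    rw [mem_sigma1, Finset.mem_insert, Finset.mem_erase, mem_sigma1]
    by_cases h1 : i = xt
    · subst h1; simp [hCbxt]
    · by_cases h2 : i = xf
      · subst h2; simp [hCbxf, hCxf, h1, hnetf]
      · rw [hCbo i h1 h2]; simp [h1, h2]
  have hcard0 : (sigma0 C).card = d := by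
    have := balanced_card hC
    omega
  have hcard1 : (sigma1 C).card = d := by
    unfold BalancedStr at hC
    omega
  have hxfns0 : xf ∉ (sigma0 C).erase xt := by
    intro h
    have := mem_sigma0.mp (Finset.mem_of_mem_erase h)
    rw [hCxf] at this
    exact absurd this (by simp)
  have hxtns1 : xt ∉ (sigma1 C).erase xf := by
    intro h
    have := mem_sigma1.mp (Finset.mem_of_mem_erase h)
    rw [hCxt] at this
    exact absurd this (by simp)
  have hCbbal : BalancedStr Cb := by
    unfold BalancedStr
    rw [hs0Cb, hs1Cb, Finset.card_insert_of_notMem hxfns0,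
      Finset.card_insert_of_notMem hxtns1, Finset.card_erase_of_mem hxt,
      Finset.card_erase_of_mem hxf, hcard0, hcard1]
  -- pattern computations
  have hpat1 : bxor A (bxor C A) = C := bxor_self_left A C
  have hpat2 : bxor A (bxor Cb A) = Cb := bxor_self_left A Cb
  have hpat3 : bxor Ab (bxor C Ab) = C := bxor_self_left Ab C
  have hpat4 : bxor Ab (bxor Cb Ab) = Cb := bxor_self_left Ab Cb
  by_cases hd1 : d = 1
  · -- degenerate case: both training sets are empty
    subst hd1
    have hsing0 : ({xt} : Finset (Fin (2 * 1))) = sigma0 C :=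
      Finset.eq_of_subset_of_card_le (Finset.singleton_subset_iff.mpr hxt)
        (by rw [hcard0]; simp)
    have hsing1 : ({xf} : Finset (Fin (2 * 1))) = sigma1 C :=
      Finset.eq_of_subset_of_card_le (Finset.singleton_subset_iff.mpr hxf)
        (by rw [hcard1]; simp)
    have h0e : (sigma0 C).erase xt = ∅ := by
      rw [← hsing0]
      exact Finset.erase_singleton xt
    have h1e : (sigma1 Cb).erase xt = ∅ := by
      rw [hs1Cb, ← hsing1, Finset.erase_singleton]
      simp
    have hT0 : ∀ h : ℕ → Label, trainOn ((sigma0 C).erase xt) h = [] := by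
      intro h
      rw [h0e, trainOn_eq]
      simp
    have hT1 : ∀ h : ℕ → Label, trainOn ((sigma1 Cb).erase xt) h = [] := by
      intro h
      rw [h1e, trainOn_eq]
      simp
    rw [hT0] at e1
    rw [hT1] at e2
    have hv1 : hyp A (bxor C A) (xt : ℕ) = (false, List.ofFn A) :=
      hyp_apply_false hn _ _ xt (by rw [hpat1]; exact hCxt)
    have hv2 : hyp A (bxor Cb A) (xt : ℕ) = (true, List.ofFn (bxor Cb A)) :=
      hyp_apply_true hn _ _ xt (by rw [hpat2]; exact hCbxt)
    have := e1.symm.trans e2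
    rw [hv1, hv2] at this
    exact absurd (congrArg Prod.fst this) (by simp)
  · -- main case: d ≥ 2
    have hd2 : 2 ≤ d := by omega
    have hS0ne : ((sigma0 C).erase xt).Nonempty := by
      rw [← Finset.card_pos, Finset.card_erase_of_mem hxt, hcard0]
      omega
    have hxtmem1 : xt ∈ sigma1 Cb := mem_sigma1.mpr hCbxt
    have hS1ne : ((sigma1 Cb).erase xt).Nonempty := by
      rw [← Finset.card_pos, Finset.card_erase_of_mem hxtmem1, hs1Cb,
        Finset.card_insert_of_notMem hxtns1, Finset.card_erase_of_mem hxf, hcard1]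
      omega
    have m1 : hyp A (bxor C A) ∈ HOTP :=
      ⟨2 * d, A, bxor C A, by omega, by rw [hpat1]; exact hC, rfl⟩
    have m2 : hyp A (bxor Cb A) ∈ HOTP :=
      ⟨2 * d, A, bxor Cb A, by omega, by rw [hpat2]; exact hCbbal, rfl⟩
    have m3 : hyp Ab (bxor C Ab) ∈ HOTP :=
      ⟨2 * d, Ab, bxor C Ab, by omega, by rw [hpat3]; exact hC, rfl⟩
    have m4 : hyp Ab (bxor Cb Ab) ∈ HOTP :=
      ⟨2 * d, Ab, bxor Cb Ab, by omega, by rw [hpat4]; exact hCbbal, rfl⟩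
    -- auxiliary: points of the training sets avoid xt and xf
    have hmem0 : ∀ s ∈ (sigma0 C).erase xt, s ≠ xt ∧ s ≠ xf ∧ C s = false := by
      intro s hs
      obtain ⟨hsne, hsmem⟩ := Finset.mem_erase.mp hs
      have hCs : C s = false := mem_sigma0.mp hsmem
      refine ⟨hsne, ?_, hCs⟩
      intro h
      rw [h, hCxf] at hCs
      exact absurd hCs (by simp)
    have hmem1 : ∀ s ∈ (sigma1 Cb).erase xt, s ≠ xt ∧ s ≠ xf ∧ Cb s = true := by
      intro s hs
      obtain ⟨hsne, hsmem⟩ := Finset.mem_erase.mp hs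
      have hCs : Cb s = true := mem_sigma1.mp hsmem
      refine ⟨hsne, ?_, hCs⟩
      intro h
      rw [h, hCbxf] at hCs
      exact absurd hCs (by simp)
    -- step 1→2
    have r12 : ψ ⟨hyp A (bxor C A), m1⟩ (xt : ℕ) < ψ ⟨hyp A (bxor Cb A), m2⟩ (xt : ℕ) := by
      apply step0 hn C A hC xt hCxt hS0ne ψ hψ Alg hAlg m1 _ m2 _ _ e1
      · intro s hs
        obtain ⟨h1, h2, h3⟩ := hmem0 s hs
        exact hyp_apply_false hn _ _ s (by rw [hpat2, hCbo s h1 h2]; exact h3)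
      · rw [hyp_apply_true hn _ _ xt (by rw [hpat2]; exact hCbxt)]
        intro h
        exact absurd (congrArg Prod.fst h) (by simp)
    -- step 2→3
    have r23 : ψ ⟨hyp A (bxor Cb A), m2⟩ (xt : ℕ) < ψ ⟨hyp Ab (bxor C Ab), m3⟩ (xt : ℕ) := by
      apply step1 hn Cb A hCbbal xt hCbxt hS1ne ψ hψ Alg hAlg m2 _ m3 _ _ e2
      · intro s hs
        obtain ⟨h1, h2, h3⟩ := hmem1 s hs
        rw [hyp_apply_true hn _ _ s (by rw [hpat3, ← hCbo s h1 h2]; exact h3)]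
        rw [hAbdef, bxor_flip2_right, ← hCbdef]
      · rw [hyp_apply_false hn _ _ xt (by rw [hpat3]; exact hCxt)]
        intro h
        exact absurd (congrArg Prod.fst h) (by simp)
    -- step 3→4
    have r34 : ψ ⟨hyp Ab (bxor C Ab), m3⟩ (xt : ℕ) < ψ ⟨hyp Ab (bxor Cb Ab), m4⟩ (xt : ℕ) := by
      apply step0 hn C Ab hC xt hCxt hS0ne ψ hψ Alg hAlg m3 _ m4 _ _ e3
      · intro s hs
        obtain ⟨h1, h2, h3⟩ := hmem0 s hs
        exact hyp_apply_false hn _ _ s (by rw [hpat4, hCbo s h1 h2]; exact h3)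
      · rw [hyp_apply_true hn _ _ xt (by rw [hpat4]; exact hCbxt)]
        intro h
        exact absurd (congrArg Prod.fst h) (by simp)
    -- step 4→1
    have r41 : ψ ⟨hyp Ab (bxor Cb Ab), m4⟩ (xt : ℕ) < ψ ⟨hyp A (bxor C A), m1⟩ (xt : ℕ) := by
      apply step1 hn Cb Ab hCbbal xt hCbxt hS1ne ψ hψ Alg hAlg m4 _ m1 _ _ e4
      · intro s hs
        obtain ⟨h1, h2, h3⟩ := hmem1 s hs
        rw [hyp_apply_true hn _ _ s (by rw [hpat1, ← hCbo s h1 h2]; exact h3)]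
        rw [hAbdef, hCbdef, bxor_flip2_flip2]
      · rw [hyp_apply_false hn _ _ xt (by rw [hpat1]; exact hCxt)]
        intro h
        exact absurd (congrArg Prod.fst h) (by simp)
    exact absurd (lt_trans (lt_trans (lt_trans r12 r23) r34) r41) (lt_irrefl _)
end
end

section
/- Fix d ≥ 1, a balanced C ∈ {0,1}^{2d}, A ∈ {0,1}^{2d}, x_test ∈ σ0(C) and x_fool ∈ σ1(C), and define C̄, Ā, h1, h2, h3, h4 as in the context. Then: h1(s) = h2(s) and h3(s) = h4(s) for every s ∈ σ0(C) \ {x_test}; moreover h1(x_test) = (0, A) ≠ (1, C̄⊕A) = h2(x_test), and h3(x_test) = (0, Ā) ≠ (1, C⊕A) = h4(x_test). -/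
open scoped Classical

noncomputable section

lemma hyp_coe {d : ℕ} (hd : 0 < d) (A B : BStr d) (s : Fin d) :
    hyp A B (s : ℕ) =
      if bxor A B s = true then (true, List.ofFn B) else (false, List.ofFn A) := by
  simp only [hyp, dif_pos hd, Nat.mod_eq_of_lt s.isLt, Fin.eta]

lemma bxor_cancel {d : ℕ} (A C : BStr d) (s : Fin d) :
    bxor A (bxor C A) s = C s := by
  simp [bxor]; cases A s <;> cases C s <;> rfl

lemma flip2_eq {d : ℕ} (C : BStr d) (x x' s : Fin d) (h1 : s ≠ x) (h2 : s ≠ x') :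
    flip2 C x x' s = C s := by
  simp [flip2, bxor, evec, h1, h2]

lemma flip2_at {d : ℕ} (C : BStr d) (x x' : Fin d) (hne : x ≠ x') :
    flip2 C x x' x = !(C x) := by
  simp [flip2, bxor, evec, hne]

/-- with `C̄ = C ⊕ e(x_test) ⊕ e(x_fool)` and `Ā = A ⊕ e(x_test) ⊕ e(x_fool)`,
the hypotheses `h1 = h_{A,C⊕A}`, `h2 = h_{A,C̄⊕A}`, `h3 = h_{Ā,C⊕Ā}`, `h4 = h_{Ā,C̄⊕Ā}`
satisfy `h1 = h2` and `h3 = h4` on `σ₀(C) \ {x_test}`, while `h1(x_test) = (0,A) ≠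
(1,C̄⊕A) = h2(x_test)` and `h3(x_test) = (0,Ā) ≠ (1,C⊕A) = h4(x_test)`. -/
theorem statement12 (d : ℕ) (hd : 1 ≤ d) (C A : BStr (2 * d)) (hC : BalancedStr C)
    (xt xf : Fin (2 * d)) (hxt : xt ∈ sigma0 C) (hxf : xf ∈ sigma1 C) :
    (∀ s ∈ sigma0 C, s ≠ xt →
        hyp A (bxor C A) s = hyp A (bxor (flip2 C xt xf) A) s ∧
        hyp (flip2 A xt xf) (bxor C (flip2 A xt xf)) s
          = hyp (flip2 A xt xf) (bxor (flip2 C xt xf) (flip2 A xt xf)) s) ∧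
    hyp A (bxor C A) xt = (false, List.ofFn A) ∧
    hyp A (bxor (flip2 C xt xf) A) xt = (true, List.ofFn (bxor (flip2 C xt xf) A)) ∧
    hyp A (bxor C A) xt ≠ hyp A (bxor (flip2 C xt xf) A) xt ∧
    hyp (flip2 A xt xf) (bxor C (flip2 A xt xf)) xt
      = (false, List.ofFn (flip2 A xt xf)) ∧
    hyp (flip2 A xt xf) (bxor (flip2 C xt xf) (flip2 A xt xf)) xt
      = (true, List.ofFn (bxor C A)) ∧
    hyp (flip2 A xt xf) (bxor C (flip2 A xt xf)) xt
      ≠ hyp (flip2 A xt xf) (bxor (flip2 C xt xf) (flip2 A xt xf)) xt := by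
  have hd2 : 0 < 2 * d := by omega
  simp only [sigma0, sigma1, Finset.mem_filter, Finset.mem_univ, true_and] at hxt hxf
  have hne : xt ≠ xf := fun h => by rw [h, hxf] at hxt; exact Bool.noConfusion hxt
  have hCbar_xt : flip2 C xt xf xt = true := by rw [flip2_at C xt xf hne, hxt]; rfl
  have hCA : bxor (flip2 C xt xf) (flip2 A xt xf) = bxor C A :=
    bxor_flip2_flip2 C A xt xf
  refine ⟨?_, ?_, ?_, ?_, ?_, ?_, ?_⟩
  · intro s hs hsxt
    simp only [sigma0, Finset.mem_filter, Finset.mem_univ, true_and] at hs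
    have hsxf : s ≠ xf := fun h => by rw [h, hxf] at hs; exact Bool.noConfusion hs
    have hCbar : flip2 C xt xf s = C s := flip2_eq C xt xf s hsxt hsxf
    constructor
    · rw [hyp_coe hd2, hyp_coe hd2, bxor_cancel, bxor_cancel, hCbar, hs]; simp
    · rw [hyp_coe hd2, hyp_coe hd2, bxor_cancel, bxor_cancel, hCbar, hs]; simp
  · rw [hyp_coe hd2, bxor_cancel, hxt]; simp
  · rw [hyp_coe hd2, bxor_cancel, hCbar_xt]; simp
  · rw [hyp_coe hd2, hyp_coe hd2, bxor_cancel, bxor_cancel, hxt, hCbar_xt]; simp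
  · rw [hyp_coe hd2, bxor_cancel, hxt]; simp
  · rw [hyp_coe hd2, bxor_cancel, hCbar_xt, hCA]; simp
  · rw [hyp_coe hd2, hyp_coe hd2, bxor_cancel, bxor_cancel, hxt, hCbar_xt]; simp
end
end
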